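/- Kantorovich inequality for unit vectors: for a positive definite matrix A with spectrum in [m,M], 0 < m < M, and unit vector x, ⟨A⁻¹x, x⟩ ≤ ((M+m)²/(4Mm))·⟨Ax, x⟩⁻¹. -/

import Mathlib

open Matrix ComplexOrder

lemma diag_quad {n : ℕ} (d : Fin n → ℝ) (y : Fin n → ℂ) :
    (star y ⬝ᵥ (Matrix.diagonal (fun i => (d i : ℂ)) *ᵥ y)).re
      = ∑ i, d i * Complex.normSq (y i) := by
  simp only [dotProduct, mulVec, Matrix.diagonal, Matrix.of_apply]
  rw [Complex.re_sum]
  congr 1; funext i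
  simp only [Pi.star_apply]
  rw [Finset.sum_eq_single i (by intro b _ hb; simp [hb.symm]) (by simp)]
  simp [Complex.normSq_apply, Complex.mul_re]
  ring

theorem kantorovich_inequality {n : ℕ} (A : Matrix (Fin n) (Fin n) ℂ)
    (hA : A.PosDef) (m M : ℝ) (hm : 0 < m) (hmM : m < M)
    (heig : ∀ i, hA.isHermitian.eigenvalues i ∈ Set.Icc m M)
    (x : Fin n → ℂ) (hx : star x ⬝ᵥ x = 1) :
    (star x ⬝ᵥ (A⁻¹ *ᵥ x)).re
      ≤ (M + m) ^ 2 / (4 * M * m) * ((star x ⬝ᵥ (A *ᵥ x)).re)⁻¹ := by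
  classical
  set U : Matrix (Fin n) (Fin n) ℂ := (hA.isHermitian.eigenvectorUnitary : Matrix (Fin n) (Fin n) ℂ) with hU
  set lam : Fin n → ℝ := hA.isHermitian.eigenvalues with hlam
  have hspec : A = U * Matrix.diagonal (fun i => (lam i : ℂ)) * star U := by
    exact hA.isHermitian.spectral_theorem
  have hUU : U * star U = 1 := Matrix.mem_unitaryGroup_iff.mp hA.isHermitian.eigenvectorUnitary.2
  have hUU' : star U * U = 1 := Matrix.mem_unitaryGroup_iff'.mp hA.isHermitian.eigenvectorUnitary.2
  have hlamne : ∀ i, (lam i : ℂ) ≠ 0 := fun i => by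
    exact_mod_cast ne_of_gt (lt_of_lt_of_le hm (heig i).1)
  have hinv : A⁻¹ = U * Matrix.diagonal (fun i => ((lam i : ℂ))⁻¹) * star U := by
    apply Matrix.inv_eq_right_inv
    rw [hspec]
    simp only [Matrix.mul_assoc]
    rw [show star U * (U * (Matrix.diagonal (fun i => ((lam i : ℂ))⁻¹) * star U))
        = Matrix.diagonal (fun i => ((lam i : ℂ))⁻¹) * star U by
      rw [← Matrix.mul_assoc, hUU', Matrix.one_mul]]
    rw [← Matrix.mul_assoc (Matrix.diagonal _), Matrix.diagonal_mul_diagonal]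
    simp only [fun i => mul_inv_cancel₀ (hlamne i)]
    rw [Matrix.diagonal_one, Matrix.one_mul, hUU]
  -- change of variables
  set y : Fin n → ℂ := star U *ᵥ x with hy
  have hstary : star x ᵥ* U = star y := by
    rw [hy, star_mulVec, Matrix.star_eq_conjTranspose, Matrix.conjTranspose_conjTranspose]
  have hquad : ∀ d : Fin n → ℂ,
      star x ⬝ᵥ ((U * Matrix.diagonal d * star U) *ᵥ x) = star y ⬝ᵥ (Matrix.diagonal d *ᵥ y) := by
    intro d
    rw [← Matrix.mulVec_mulVec, ← Matrix.mulVec_mulVec, Matrix.dotProduct_mulVec (star x) U,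
      hstary, hy]
  have hT : (star x ⬝ᵥ (A *ᵥ x)).re = ∑ i, lam i * Complex.normSq (y i) := by
    rw [hspec, hquad, diag_quad]
  have hS : (star x ⬝ᵥ (A⁻¹ *ᵥ x)).re = ∑ i, (lam i)⁻¹ * Complex.normSq (y i) := by
    rw [hinv, hquad]
    simpa [Complex.ofReal_inv] using diag_quad (fun i => (lam i)⁻¹) y
  have hw1 : ∑ i, Complex.normSq (y i) = 1 := by
    have h1 : star y ⬝ᵥ y = 1 := by
      rw [hy, star_mulVec, Matrix.star_eq_conjTranspose, Matrix.conjTranspose_conjTranspose,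
        Matrix.dotProduct_mulVec, Matrix.vecMul_vecMul, ← Matrix.star_eq_conjTranspose U,
        hUU, Matrix.vecMul_one, hx]
    have := congrArg Complex.re h1
    rw [dotProduct, Complex.re_sum] at this
    simpa [Complex.normSq_apply, Complex.mul_re, mul_comm] using this
  -- real inequality
  set w : Fin n → ℝ := fun i => Complex.normSq (y i) with hwdef
  have hwnn : ∀ i, 0 ≤ w i := fun i => Complex.normSq_nonneg _
  set T : ℝ := ∑ i, lam i * w i with hTdef
  have hmT : m ≤ T := by
    calc m = ∑ i, m * w i := by rw [← Finset.mul_sum, hw1, mul_one]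
    _ ≤ T := Finset.sum_le_sum fun i _ => mul_le_mul_of_nonneg_right (heig i).1 (hwnn i)
  have hTpos : 0 < T := lt_of_lt_of_le hm hmT
  have hSle : ∑ i, (lam i)⁻¹ * w i ≤ (M + m - T) / (M * m) := by
    have hle : ∑ i, (lam i)⁻¹ * w i ≤ ∑ i, ((M + m - lam i) / (M * m)) * w i := by
      apply Finset.sum_le_sum
      intro i _
      apply mul_le_mul_of_nonneg_right _ (hwnn i)
      have h1 : m ≤ lam i := (heig i).1
      have h2 : lam i ≤ M := (heig i).2
      have hl : 0 < lam i := lt_of_lt_of_le hm h1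
      rw [inv_eq_one_div, div_le_div_iff₀ hl (mul_pos (hm.trans hmM) hm)]
      nlinarith [mul_nonneg (sub_nonneg.2 h1) (sub_nonneg.2 h2)]
    have heq : ∑ i, ((M + m - lam i) / (M * m)) * w i
        = ((M + m) * (∑ i, w i) - ∑ i, lam i * w i) / (M * m) := by
      rw [Finset.mul_sum, ← Finset.sum_sub_distrib, Finset.sum_div]
      congr 1; funext i
      field_simp
    rw [heq, hw1, mul_one, ← hTdef] at hle
    exact hle
  rw [hS, hT]
  refine le_trans hSle ?_
  have h4 : (M + m) ^ 2 / (4 * M * m) * T⁻¹ = (M + m) ^ 2 / (4 * T) / (M * m) := by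
    field_simp
  rw [h4, div_le_div_iff_of_pos_right (mul_pos (hm.trans hmM) hm), le_div_iff₀ (by positivity)]
  nlinarith [sq_nonneg (M + m - 2 * T)]
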